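/- Let d ≥ 1, let M be a d×d real matrix and y₀ ∈ ℝᵈ. Define u : ℝ² → ℝᵈ by u(t,x) := (∑_{n=0}^∞ ((t·x)ⁿ/(n!)²) · Mⁿ) · y₀, the series converging absolutely. Then for all (t,x) ∈ ℝ², u(t,x) = y₀ + ∫₀ᵗ ∫₀ˣ M · u(s,a) da ds; that is, u solves the two-parameter linear Volterra integral equation u(t,x) = y₀ + M ∫_{R_{(t,x)}} u(ζ) dζ. -/

import Mathlib

open Matrix MeasureTheory

lemma intervalIntegral_tsum_comm {E : Type*} [NormedAddCommGroup E] [NormedSpace ℝ E]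
    [CompleteSpace E]
    (f : ℕ → ℝ → E) (a b : ℝ) (hc : ∀ n, Continuous (f n))
    (g : ℕ → ℝ) (hg : Summable g)
    (hbd : ∀ n, ∀ s ∈ Set.uIcc a b, ‖f n s‖ ≤ g n) :
    ∫ s in a..b, ∑' n, f n s = ∑' n, ∫ s in a..b, f n s := by
  have hint : ∀ n, IntegrableOn (f n) (Set.uIoc a b) := fun n =>
    ((hc n).integrableOn_uIcc).mono_set Set.uIoc_subset_uIcc
  have hsummable : Summable fun n => ∫ s in Set.uIoc a b, ‖f n s‖ := by
    refine Summable.of_nonneg_of_le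
      (fun n => integral_nonneg fun _ => norm_nonneg _) (fun n => ?_) (hg.mul_right |b - a|)
    calc ∫ s in Set.uIoc a b, ‖f n s‖
        ≤ ∫ _s in Set.uIoc a b, g n := by
          refine setIntegral_mono_on (hint n).norm (integrableOn_const ?_)
            measurableSet_uIoc (fun s hs => hbd n s (Set.uIoc_subset_uIcc hs))
          apply ne_of_lt
          rw [Set.uIoc]
          exact measure_Ioc_lt_top
      _ = g n * |b - a| := by
          rw [setIntegral_const, Set.uIoc, Real.volume_real_Ioc_of_le min_le_max,
            max_sub_min_eq_abs,
            abs_sub_comm, smul_eq_mul, mul_comm]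
  have hsum : HasSum (fun n => ∫ s in Set.uIoc a b, f n s)
      (∫ s in Set.uIoc a b, ∑' n, f n s) :=
    hasSum_integral_of_summable_integral_norm hint hsummable
  rw [intervalIntegral.intervalIntegral_eq_integral_uIoc, ← hsum.tsum_eq,
    ← tsum_const_smul'' ((if a ≤ b then 1 else -1 : ℝ))]
  refine tsum_congr fun n => ?_
  rw [intervalIntegral.intervalIntegral_eq_integral_uIoc]

attribute [local instance] Matrix.linftyOpNormedRing Matrix.linftyOpNormedAlgebra

lemma summable_aux {E : Type*} [NormedAddCommGroup E] [CompleteSpace E] (f : ℕ → E) (r c : ℝ)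
    (hf : ∀ n, ‖f n‖ ≤ c * (r ^ n / n.factorial)) : Summable f :=
  Summable.of_norm_bounded ((Real.summable_pow_div_factorial r).mul_left c) hf

lemma coeff_abs_le' (r K : ℝ) (n : ℕ) :
    |r ^ n * K / ((n.factorial : ℝ)) ^ 2| ≤ |r| ^ n * |K| / n.factorial := by
  have h1 : (1 : ℝ) ≤ (n.factorial : ℝ) := by exact_mod_cast n.factorial_pos
  rw [abs_div, abs_mul, abs_pow, abs_of_nonneg (by positivity : (0:ℝ) ≤ ((n.factorial : ℝ))^2)]
  apply div_le_div_of_nonneg_left ?_ (by positivity) ?_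
  · positivity
  · nlinarith

lemma coeff_abs_le (r : ℝ) (n : ℕ) :
    |r ^ n / ((n.factorial : ℝ)) ^ 2| ≤ |r| ^ n / n.factorial := by
  have h1 : (1 : ℝ) ≤ (n.factorial : ℝ) := by exact_mod_cast n.factorial_pos
  rw [abs_div, abs_pow, abs_of_nonneg (by positivity : (0:ℝ) ≤ ((n.factorial : ℝ))^2)]
  apply div_le_div_of_nonneg_left ?_ (by positivity) ?_
  · positivity
  · nlinarith

/-- The matrix-series function `u(t,x) = (∑_{n≥0} ((t·x)ⁿ/(n!)²) Mⁿ) y₀` solves the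
two-parameter linear Volterra integral equation `u(t,x) = y₀ + ∫₀ᵗ∫₀ˣ M u(s,a) da ds`. -/
theorem volterra_series_solves_integral_equation
    (d : ℕ) (hd : 1 ≤ d) (M : Matrix (Fin d) (Fin d) ℝ) (y₀ : Fin d → ℝ)
    (u : ℝ × ℝ → Fin d → ℝ)
    (hu : ∀ t x : ℝ,
      u (t, x) = (∑' n : ℕ, ((t * x) ^ n / ((n.factorial : ℝ)) ^ 2) • M ^ n).mulVec y₀) :
    ∀ t x : ℝ,
      u (t, x) = y₀ + ∫ s in (0 : ℝ)..t, ∫ a in (0 : ℝ)..x, M.mulVec (u (s, a)) := by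
  haveI : Nonempty (Fin d) := ⟨⟨0, hd⟩⟩
  intro t x
  set C : ℝ := ‖M‖ with hC
  have hC0 : 0 ≤ C := norm_nonneg M
  set v : ℕ → Fin d → ℝ := fun n => (M ^ n).mulVec y₀ with hv
  have hvb : ∀ n, ‖v n‖ ≤ C ^ n * ‖y₀‖ := fun n =>
    (Matrix.linfty_opNorm_mulVec _ _).trans
      (mul_le_mul_of_nonneg_right (norm_pow_le M n) (norm_nonneg y₀))
  -- series representation of u
  have hrep : ∀ s a : ℝ, u (s, a)
      = ∑' n : ℕ, ((s * a) ^ n / ((n.factorial : ℝ)) ^ 2) • v n := by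
    intro s a
    rw [hu s a]
    let L : Matrix (Fin d) (Fin d) ℝ →ₗ[ℝ] (Fin d → ℝ) :=
      { toFun := fun A => A.mulVec y₀
        map_add' := fun A B => Matrix.add_mulVec A B y₀
        map_smul' := fun c A => Matrix.smul_mulVec _ _ _ }
    have hsm : Summable fun n : ℕ => ((s * a) ^ n / ((n.factorial : ℝ)) ^ 2) • M ^ n := by
      apply summable_aux _ (|s * a| * C) 1 (fun n => ?_)
      rw [norm_smul, Real.norm_eq_abs]
      calc |(s * a) ^ n / ((n.factorial : ℝ)) ^ 2| * ‖M ^ n‖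
          ≤ (|s * a| ^ n / n.factorial) * C ^ n :=
            mul_le_mul (coeff_abs_le _ _) (norm_pow_le M n) (norm_nonneg _) (by positivity)
        _ = 1 * ((|s * a| * C) ^ n / n.factorial) := by rw [mul_pow]; ring
    have hmap := (LinearMap.toContinuousLinearMap L).map_tsum hsm
    simp only [LinearMap.coe_toContinuousLinearMap'] at hmap
    calc L (∑' n : ℕ, ((s * a) ^ n / ((n.factorial : ℝ)) ^ 2) • M ^ n)
        = ∑' n : ℕ, L (((s * a) ^ n / ((n.factorial : ℝ)) ^ 2) • M ^ n) := hmap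
      _ = ∑' n : ℕ, ((s * a) ^ n / ((n.factorial : ℝ)) ^ 2) • v n :=
          tsum_congr fun n => L.map_smul _ _
  -- summability of the vector series
  have hsumv : ∀ r : ℝ, Summable fun n : ℕ => (r ^ n / ((n.factorial : ℝ)) ^ 2) • v n := by
    intro r
    apply summable_aux _ (|r| * C) ‖y₀‖ (fun n => ?_)
    rw [norm_smul, Real.norm_eq_abs]
    calc |r ^ n / ((n.factorial : ℝ)) ^ 2| * ‖v n‖
        ≤ (|r| ^ n / n.factorial) * (C ^ n * ‖y₀‖) :=
          mul_le_mul (coeff_abs_le _ _) (hvb n) (norm_nonneg _) (by positivity)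
      _ = ‖y₀‖ * ((|r| * C) ^ n / n.factorial) := by rw [mul_pow]; ring
  -- action of M
  have hMu : ∀ s a : ℝ, M.mulVec (u (s, a))
      = ∑' n : ℕ, ((s * a) ^ n / ((n.factorial : ℝ)) ^ 2) • v (n + 1) := by
    intro s a
    rw [hrep s a]
    have hmap := (LinearMap.toContinuousLinearMap M.mulVecLin).map_tsum (hsumv (s * a))
    simp only [LinearMap.coe_toContinuousLinearMap'] at hmap
    calc M.mulVec (∑' n : ℕ, ((s * a) ^ n / ((n.factorial : ℝ)) ^ 2) • v n)
        = ∑' n : ℕ, M.mulVecLin (((s * a) ^ n / ((n.factorial : ℝ)) ^ 2) • v n) := hmap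
      _ = ∑' n : ℕ, ((s * a) ^ n / ((n.factorial : ℝ)) ^ 2) • v (n + 1) := by
          refine tsum_congr fun n => ?_
          rw [LinearMap.map_smul]
          congr 1
          rw [Matrix.mulVecLin_apply]
          show M.mulVec ((M ^ n).mulVec y₀) = (M ^ (n + 1)).mulVec y₀
          rw [Matrix.mulVec_mulVec, ← pow_succ']
  -- |a| ≤ |r| on uIcc 0 r
  have habs : ∀ (r a : ℝ), a ∈ Set.uIcc 0 r → |a| ≤ |r| := by
    intro r a ha
    rcases Set.mem_uIcc.1 ha with ⟨h1, h2⟩ | ⟨h1, h2⟩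
    · rw [abs_of_nonneg h1]; exact h2.trans (le_abs_self r)
    · rw [abs_of_nonpos h2]; exact (neg_le_neg h1).trans (neg_le_abs r)
  -- inner integral
  have hinner : ∀ s : ℝ, (∫ a in (0:ℝ)..x, M.mulVec (u (s, a)))
      = ∑' n : ℕ, (s ^ n * (x ^ (n + 1) / ((n : ℝ) + 1)) / ((n.factorial : ℝ)) ^ 2) • v (n + 1) := by
    intro s
    have h1 : (∫ a in (0:ℝ)..x, M.mulVec (u (s, a)))
        = ∫ a in (0:ℝ)..x, ∑' n : ℕ, ((s * a) ^ n / ((n.factorial : ℝ)) ^ 2) • v (n + 1) :=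
      intervalIntegral.integral_congr fun a _ => hMu s a
    rw [h1, intervalIntegral_tsum_comm _ _ _ ?_
      (fun n => (C * ‖y₀‖) * ((|s| * |x| * C) ^ n / n.factorial)) ?_ ?_]
    · refine tsum_congr fun n => ?_
      rw [intervalIntegral.integral_smul_const]
      congr 1
      have heq : (fun a : ℝ => (s * a) ^ n / ((n.factorial : ℝ)) ^ 2)
          = fun a : ℝ => (s ^ n / ((n.factorial : ℝ)) ^ 2) * a ^ n := by
        funext a; rw [mul_pow]; ring
      rw [heq, intervalIntegral.integral_const_mul, integral_pow,
        zero_pow (Nat.succ_ne_zero n), sub_zero]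
      ring
    · intro n; fun_prop
    · exact (Real.summable_pow_div_factorial _).mul_left _
    · intro n a ha
      rw [norm_smul, Real.norm_eq_abs]
      calc |(s * a) ^ n / ((n.factorial : ℝ)) ^ 2| * ‖v (n + 1)‖
          ≤ (|s * a| ^ n / n.factorial) * (C ^ (n + 1) * ‖y₀‖) :=
            mul_le_mul (coeff_abs_le _ _) (hvb _) (norm_nonneg _) (by positivity)
        _ ≤ ((|s| * |x|) ^ n / n.factorial) * (C ^ (n + 1) * ‖y₀‖) := by
            gcongr
            rw [abs_mul]
            exact mul_le_mul_of_nonneg_left (habs x a ha) (abs_nonneg s)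
        _ = (C * ‖y₀‖) * ((|s| * |x| * C) ^ n / n.factorial) := by
            rw [mul_pow (|s| * |x|) C, pow_succ]; ring
  -- outer integral
  have houter : (∫ s in (0:ℝ)..t, ∫ a in (0:ℝ)..x, M.mulVec (u (s, a)))
      = ∑' n : ℕ, ((t ^ (n + 1) / ((n : ℝ) + 1)) * (x ^ (n + 1) / ((n : ℝ) + 1))
          / ((n.factorial : ℝ)) ^ 2) • v (n + 1) := by
    have h1 : (∫ s in (0:ℝ)..t, ∫ a in (0:ℝ)..x, M.mulVec (u (s, a)))
        = ∫ s in (0:ℝ)..t, ∑' n : ℕ,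
            (s ^ n * (x ^ (n + 1) / ((n : ℝ) + 1)) / ((n.factorial : ℝ)) ^ 2) • v (n + 1) :=
      intervalIntegral.integral_congr fun s _ => hinner s
    rw [h1, intervalIntegral_tsum_comm _ _ _ ?_
      (fun n => (|x| * C * ‖y₀‖) * ((|t| * |x| * C) ^ n / n.factorial)) ?_ ?_]
    · refine tsum_congr fun n => ?_
      rw [intervalIntegral.integral_smul_const]
      congr 1
      have heq : (fun s : ℝ => s ^ n * (x ^ (n + 1) / ((n : ℝ) + 1)) / ((n.factorial : ℝ)) ^ 2)
          = fun s : ℝ => ((x ^ (n + 1) / ((n : ℝ) + 1)) / ((n.factorial : ℝ)) ^ 2) * s ^ n := by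
        funext s; ring
      rw [heq, intervalIntegral.integral_const_mul, integral_pow,
        zero_pow (Nat.succ_ne_zero n), sub_zero]
      ring
    · intro n; fun_prop
    · exact (Real.summable_pow_div_factorial _).mul_left _
    · intro n s hs
      rw [norm_smul, Real.norm_eq_abs]
      calc |s ^ n * (x ^ (n + 1) / ((n : ℝ) + 1)) / ((n.factorial : ℝ)) ^ 2| * ‖v (n + 1)‖
          ≤ (|s| ^ n * |x ^ (n + 1) / ((n : ℝ) + 1)| / n.factorial) * (C ^ (n + 1) * ‖y₀‖) :=
            mul_le_mul (coeff_abs_le' _ _ _) (hvb _) (norm_nonneg _) (by positivity)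
        _ ≤ (|t| ^ n * |x| ^ (n + 1) / n.factorial) * (C ^ (n + 1) * ‖y₀‖) := by
            have hx : |x ^ (n + 1) / ((n : ℝ) + 1)| ≤ |x| ^ (n + 1) := by
              rw [abs_div, abs_pow, abs_of_nonneg (by positivity : (0:ℝ) ≤ (n : ℝ) + 1)]
              apply div_le_self (by positivity)
              simp
            have hst : |s| ^ n ≤ |t| ^ n := pow_le_pow_left₀ (abs_nonneg s) (habs t s hs) n
            have hfac : (0:ℝ) < n.factorial := by exact_mod_cast n.factorial_pos
            apply mul_le_mul_of_nonneg_right ?_ (by positivity)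
            apply (div_le_div_iff_of_pos_right hfac).2
            exact mul_le_mul hst hx (abs_nonneg _) (by positivity)
        _ = (|x| * C * ‖y₀‖) * ((|t| * |x| * C) ^ n / n.factorial) := by
            rw [mul_pow (|t| * |x|) C, mul_pow (|t|) (|x|), pow_succ (|x|), pow_succ C]; ring
  -- assemble
  rw [houter, hrep t x, (hsumv (t * x)).tsum_eq_zero_add]
  congr 1
  · simp [hv]
  · refine tsum_congr fun n => ?_
    congr 1
    have hne : ((n.factorial : ℝ)) ≠ 0 := by positivity
    have hne2 : ((n : ℝ) + 1) ≠ 0 := by positivity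
    rw [Nat.factorial_succ]
    push_cast
    field_simp
    ring
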